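/- Let V : [0,∞) → ℝ be a right-continuous function with left limits, of finite variation on every compact interval. Then the set of complex levels for V has Lebesgue measure zero; equivalently, Lebesgue-almost every x ∈ ℝ is a simple level for V. -/

import Mathlib

open MeasureTheory Set Filter
open scoped ENNReal NNReal

noncomputable section

/-- `x` is a *simple level* for `V` (with left limits `Vm`): the set
`{t > 0 : V(t−) < x < V(t) or V(t) < x < V(t−) or V(t) = x}` has no accumulation point in
`[0,∞)` (it is discrete), and no jump of `V` starts or ends at `x`. -/
def SimpleLevel (V Vm : ℝ → ℝ) (x : ℝ) : Prop :=
  (∀ a : ℝ, 0 ≤ a →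
      ¬ AccPt a (Filter.principal
        {u : ℝ | 0 < u ∧ ((Vm u < x ∧ x < V u) ∨ (V u < x ∧ x < Vm u) ∨ V u = x)})) ∧
  {u : ℝ | 0 < u ∧ V u ≠ Vm u ∧ (x = V u ∨ x = Vm u)} = ∅

namespace AeSimpleAux

variable (V Vm : ℝ → ℝ)

/-- the set of level-x visit/crossing times -/
def Sset (x : ℝ) : Set ℝ :=
  {u : ℝ | 0 < u ∧ ((Vm u < x ∧ x < V u) ∨ (V u < x ∧ x < Vm u) ∨ V u = x)}

/-- partition points -/
def pt (n j : ℕ) : ℝ := (j : ℝ) / 2 ^ n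

def mI (n j : ℕ) : ℝ := sInf (V '' Icc (pt n j) (pt n (j + 1)))
def MI (n j : ℕ) : ℝ := sSup (V '' Icc (pt n j) (pt n (j + 1)))

/-- Banach indicatrix approximation -/
def NN (T n : ℕ) (x : ℝ) : ℝ≥0∞ :=
  ∑ j ∈ Finset.range (T * 2 ^ n), (Icc (mI V n j) (MI V n j)).indicator 1 x

lemma pt_mono (n : ℕ) {i j : ℕ} (h : i ≤ j) : pt n i ≤ pt n j := by
  unfold pt
  have : (i:ℝ) ≤ j := by exact_mod_cast h
  have h2 : (0:ℝ) < 2 ^ n := by positivity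
  apply div_le_div_of_nonneg_right this (by positivity)

lemma pt_nonneg (n j : ℕ) : 0 ≤ pt n j := by unfold pt; positivity

lemma bddAbove_image {T : ℝ} (hbv : BoundedVariationOn V (Icc 0 T)) {s : Set ℝ}
    (hs : s ⊆ Icc 0 T) : BddAbove (V '' s) := by
  refine ⟨V 0 + (eVariationOn V (Icc 0 T)).toReal, ?_⟩
  rintro y ⟨t, ht, rfl⟩
  have ht' := hs ht
  have h0 : (0 : ℝ) ∈ Icc 0 T := ⟨le_refl _, ht'.1.trans ht'.2⟩
  have := hbv.sub_le ht' h0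
  linarith

lemma bddBelow_image {T : ℝ} (hbv : BoundedVariationOn V (Icc 0 T)) {s : Set ℝ}
    (hs : s ⊆ Icc 0 T) : BddBelow (V '' s) := by
  refine ⟨V 0 - (eVariationOn V (Icc 0 T)).toReal, ?_⟩
  rintro y ⟨t, ht, rfl⟩
  have ht' := hs ht
  have h0 : (0 : ℝ) ∈ Icc 0 T := ⟨le_refl _, ht'.1.trans ht'.2⟩
  have := hbv.sub_le h0 ht'
  linarith

lemma mem_mM {T : ℝ} (hbv : BoundedVariationOn V (Icc 0 T)) {n j : ℕ}
    (hsub : Icc (pt n j) (pt n (j + 1)) ⊆ Icc 0 T) {t : ℝ}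
    (ht : t ∈ Icc (pt n j) (pt n (j + 1))) : V t ∈ Icc (mI V n j) (MI V n j) := by
  constructor
  · exact csInf_le (bddBelow_image V hbv hsub) (mem_image_of_mem V ht)
  · exact le_csSup (bddAbove_image V hbv hsub) (mem_image_of_mem V ht)


lemma Vm_mem_mM {T : ℝ} (hbv : BoundedVariationOn V (Icc 0 T)) {n j : ℕ}
    (hsub : Icc (pt n j) (pt n (j + 1)) ⊆ Icc 0 T)
    (hll : ∀ s ∈ Set.Ioi (0 : ℝ),
      Filter.Tendsto V (nhdsWithin s (Set.Iio s)) (nhds (Vm s))) {t : ℝ}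
    (ht : t ∈ Ioc (pt n j) (pt n (j + 1))) : Vm t ∈ Icc (mI V n j) (MI V n j) := by
  have htpos : 0 < t := lt_of_le_of_lt (pt_nonneg n j) ht.1
  have hl := hll t htpos
  have hev : Ioo (pt n j) t ∈ nhdsWithin t (Iio t) :=
    Ioo_mem_nhdsLT_of_mem ⟨ht.1, le_refl t⟩
  refine isClosed_Icc.mem_of_tendsto hl ?_
  filter_upwards [hev] with s hs
  exact mem_mM V hbv hsub ⟨hs.1.le, hs.2.le.trans ht.2⟩

lemma osc_le {T : ℝ} (hbv : BoundedVariationOn V (Icc 0 T)) {n j : ℕ}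
    (hsub : Icc (pt n j) (pt n (j + 1)) ⊆ Icc 0 T) :
    MI V n j - mI V n j ≤ (eVariationOn V (Icc (pt n j) (pt n (j + 1)))).toReal := by
  set I := Icc (pt n j) (pt n (j + 1)) with hI
  have hbv' : BoundedVariationOn V I :=
    (lt_of_le_of_lt (eVariationOn.mono V hsub) hbv.lt_top).ne
  have hne : (V '' I).Nonempty :=
    (Set.nonempty_Icc.2 (pt_mono n (Nat.le_succ j))).image V
  have h1 : MI V n j ≤ mI V n j + (eVariationOn V I).toReal := by
    apply csSup_le hne
    rintro y ⟨t, htI, rfl⟩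
    have : V t - (eVariationOn V I).toReal ≤ mI V n j := by
      apply le_csInf hne
      rintro z ⟨s, hsI, rfl⟩
      have := hbv'.sub_le htI hsI
      linarith
    linarith
  linarith

lemma sum_eVar (K n : ℕ) :
    ∑ j ∈ Finset.range K, eVariationOn V (Icc (pt n j) (pt n (j + 1)))
      = eVariationOn V (Icc 0 (pt n K)) := by
  induction K with
  | zero =>
      simp [pt, eVariationOn.subsingleton V (s := Icc (0:ℝ) 0) (by simp)]
  | succ K ih =>
      rw [Finset.sum_range_succ, ih]
      have h := eVariationOn.Icc_add_Icc V (s := (univ : Set ℝ))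
        (pt_nonneg n K) (pt_mono n (Nat.le_succ K)) (mem_univ _)
      simpa using h

lemma lintegral_NN_le {T n : ℕ} (hbv : BoundedVariationOn V (Icc 0 (T:ℝ))) :
    ∫⁻ x, NN V T n x ≤ eVariationOn V (Icc 0 (T:ℝ)) := by
  have hTeq : pt n (T * 2 ^ n) = (T : ℝ) := by
    unfold pt
    push_cast
    field_simp
  have hmeas : ∀ j : ℕ, Measurable fun x => (Icc (mI V n j) (MI V n j)).indicator
      (1 : ℝ → ℝ≥0∞) x :=
    fun j => measurable_one.indicator measurableSet_Icc
  rw [show (fun x => NN V T n x) = fun x => ∑ j ∈ Finset.range (T * 2 ^ n),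
      (Icc (mI V n j) (MI V n j)).indicator 1 x from rfl]
  rw [lintegral_finset_sum _ fun j _ => hmeas j]
  calc ∑ j ∈ Finset.range (T * 2 ^ n), ∫⁻ x, (Icc (mI V n j) (MI V n j)).indicator 1 x
      = ∑ j ∈ Finset.range (T * 2 ^ n), volume (Icc (mI V n j) (MI V n j)) := by
        refine Finset.sum_congr rfl fun j _ => ?_
        exact lintegral_indicator_one measurableSet_Icc
    _ ≤ ∑ j ∈ Finset.range (T * 2 ^ n), eVariationOn V (Icc (pt n j) (pt n (j + 1))) := by
        refine Finset.sum_le_sum fun j hj => ?_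
        rw [Real.volume_Icc]
        have hsub : Icc (pt n j) (pt n (j + 1)) ⊆ Icc 0 (T:ℝ) := by
          apply Icc_subset_Icc (pt_nonneg n j)
          rw [← hTeq]
          exact pt_mono n (by simpa using Finset.mem_range.1 hj)
        have h1 := osc_le V hbv hsub
        have h2 : eVariationOn V (Icc (pt n j) (pt n (j + 1))) ≠ ⊤ :=
          (lt_of_le_of_lt (eVariationOn.mono V hsub) hbv.lt_top).ne
        calc ENNReal.ofReal (MI V n j - mI V n j)
            ≤ ENNReal.ofReal (eVariationOn V (Icc (pt n j) (pt n (j + 1)))).toReal :=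
              ENNReal.ofReal_le_ofReal h1
          _ = eVariationOn V (Icc (pt n j) (pt n (j + 1))) := ENNReal.ofReal_toReal h2
    _ = eVariationOn V (Icc 0 (pt n (T * 2 ^ n))) := sum_eVar V _ n
    _ = eVariationOn V (Icc 0 (T:ℝ)) := by rw [hTeq]

lemma exists_sep {t : Finset ℝ} :
    ∃ δ : ℝ, 0 < δ ∧ ∀ u ∈ t, ∀ v ∈ t, u < v → δ ≤ v - u := by
  set P := (t ×ˢ t).filter fun p : ℝ × ℝ => p.1 < p.2 with hP
  rcases P.eq_empty_or_nonempty with hPe | hPne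
  · refine ⟨1, one_pos, fun u hu v hv huv => ?_⟩
    exfalso
    have : (u, v) ∈ P := by
      rw [hP]; exact Finset.mem_filter.2 ⟨Finset.mem_product.2 ⟨hu, hv⟩, huv⟩
    simp [hPe] at this
  · obtain ⟨p, hpP, hpmin⟩ := Finset.exists_min_image P (fun p => p.2 - p.1) hPne
    have hp' := Finset.mem_filter.1 hpP
    refine ⟨p.2 - p.1, by linarith [hp'.2], fun u hu v hv huv => ?_⟩
    exact hpmin (u, v) (Finset.mem_filter.2 ⟨Finset.mem_product.2 ⟨hu, hv⟩, huv⟩)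

lemma NN_ge {T : ℕ} (hbv : BoundedVariationOn V (Icc 0 (T:ℝ)))
    (hll : ∀ s ∈ Set.Ioi (0 : ℝ),
      Filter.Tendsto V (nhdsWithin s (Set.Iio s)) (nhds (Vm s)))
    {x : ℝ} {t : Finset ℝ} (hts : ↑t ⊆ Sset V Vm x ∩ Ioc 0 (T:ℝ))
    {δ : ℝ} (hδ : 0 < δ) (hsep : ∀ u ∈ t, ∀ v ∈ t, u < v → δ ≤ v - u)
    {m : ℕ} (hm : (1/2 : ℝ) ^ m < δ) :
    (t.card : ℝ≥0∞) ≤ NN V T m x := by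
  have hTeq : pt m (T * 2 ^ m) = (T : ℝ) := by
    unfold pt; push_cast; field_simp
  have hpow : (0:ℝ) < 2 ^ m := by positivity
  have hmesh : 1 < δ * 2 ^ m := by
    have h12 : (1/2:ℝ) ^ m * 2 ^ m = 1 := by rw [← mul_pow]; norm_num
    nlinarith
  set jm : ℝ → ℕ := fun u => (⌈u * 2 ^ m⌉).toNat - 1 with hjm
  have hjcast : ∀ u ∈ t, (jm u : ℝ) = (⌈u * 2 ^ m⌉ : ℝ) - 1 := by
    intro u hu
    obtain ⟨_, hu0, _⟩ := hts hu
    have hupos : 0 < u * 2 ^ m := by positivity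
    have hc1 : 1 ≤ ⌈u * 2 ^ m⌉ := Int.ceil_pos.2 hupos
    have h1n : 1 ≤ (⌈u * 2 ^ m⌉).toNat := by omega
    have h2 : ((⌈u * 2 ^ m⌉).toNat : ℝ) = ((⌈u * 2 ^ m⌉ : ℤ) : ℝ) := by
      exact_mod_cast Int.toNat_of_nonneg (by omega : (0:ℤ) ≤ ⌈u * 2 ^ m⌉)
    show (((⌈u * 2 ^ m⌉).toNat - 1 : ℕ) : ℝ) = _
    rw [Nat.cast_sub h1n, Nat.cast_one, h2]
  have key : ∀ u ∈ t, jm u ∈ Finset.range (T * 2 ^ m) ∧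
      u ∈ Ioc (pt m (jm u)) (pt m (jm u + 1)) := by
    intro u hu
    obtain ⟨huS, hu0, huT⟩ := hts hu
    have hupos : 0 < u * 2 ^ m := by positivity
    have hc1 : 1 ≤ ⌈u * 2 ^ m⌉ := Int.ceil_pos.2 hupos
    have hcle : ⌈u * 2 ^ m⌉ ≤ (T * 2 ^ m : ℕ) := by
      apply Int.ceil_le.2
      push_cast
      nlinarith
    constructor
    · apply Finset.mem_range.2
      show (⌈u * 2 ^ m⌉).toNat - 1 < T * 2 ^ m
      omega
    · have hj1 : (jm u : ℝ) + 1 = (⌈u * 2 ^ m⌉ : ℝ) := by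
        rw [hjcast u hu]; ring
      constructor
      · show pt m (jm u) < u
        rw [pt, div_lt_iff₀ hpow, hjcast u hu]
        have := Int.ceil_lt_add_one (u * 2 ^ m)
        linarith
      · show u ≤ pt m (jm u + 1)
        rw [pt, le_div_iff₀ hpow]
        push_cast
        rw [hj1]
        exact Int.le_ceil _
  have hmem : ∀ u ∈ t, x ∈ Icc (mI V m (jm u)) (MI V m (jm u)) := by
    intro u hu
    obtain ⟨huS, hu0, huT⟩ := hts hu
    obtain ⟨hrange, hIoc⟩ := key u hu
    have hsub : Icc (pt m (jm u)) (pt m (jm u + 1)) ⊆ Icc 0 (T:ℝ) := by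
      apply Icc_subset_Icc (pt_nonneg m _)
      rw [← hTeq]
      exact pt_mono m (Finset.mem_range.1 hrange)
    have hVu : V u ∈ Icc (mI V m (jm u)) (MI V m (jm u)) :=
      mem_mM V hbv hsub ⟨hIoc.1.le, hIoc.2⟩
    have hVmu : Vm u ∈ Icc (mI V m (jm u)) (MI V m (jm u)) :=
      Vm_mem_mM V Vm hbv hsub hll hIoc
    rcases huS.2 with ⟨h1, h2⟩ | ⟨h1, h2⟩ | h1
    · exact ⟨le_trans hVmu.1 h1.le, le_trans h2.le hVu.2⟩
    · exact ⟨le_trans hVu.1 h1.le, le_trans h2.le hVmu.2⟩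
    · exact h1 ▸ hVu
  have hstrict : ∀ u ∈ t, ∀ v ∈ t, u < v → jm u < jm v := by
    intro u hu v hv huv
    have hδuv := hsep u hu v hv huv
    have h1 := Int.ceil_lt_add_one (u * 2 ^ m)
    have h2 := Int.le_ceil (v * 2 ^ m)
    have hlt : (⌈u * 2 ^ m⌉ : ℝ) < (⌈v * 2 ^ m⌉ : ℝ) := by nlinarith
    have hltz : ⌈u * 2 ^ m⌉ < ⌈v * 2 ^ m⌉ := by exact_mod_cast hlt
    obtain ⟨_, hu0, _⟩ := hts hu
    have hc1 : 1 ≤ ⌈u * 2 ^ m⌉ := Int.ceil_pos.2 (by positivity)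
    show (⌈u * 2 ^ m⌉).toNat - 1 < (⌈v * 2 ^ m⌉).toNat - 1
    omega
  have hinj : Set.InjOn jm ↑t := by
    intro u hu v hv he
    by_contra hne
    rcases lt_or_gt_of_ne hne with h | h
    · exact absurd he (hstrict u hu v hv h).ne
    · exact absurd he.symm (hstrict v hv u hu h).ne
  calc (t.card : ℝ≥0∞) = ((t.image jm).card : ℝ≥0∞) := by
        rw [Finset.card_image_of_injOn hinj]
    _ = ∑ j ∈ t.image jm, (Icc (mI V m j) (MI V m j)).indicator 1 x := by
        rw [Finset.card_eq_sum_ones]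
        push_cast
        refine Finset.sum_congr rfl fun j hj => ?_
        obtain ⟨u, hu, rfl⟩ := Finset.mem_image.1 hj
        rw [Set.indicator_of_mem (hmem u hu)]
        rfl
    _ ≤ NN V T m x := by
        apply Finset.sum_le_sum_of_subset
        intro j hj
        obtain ⟨u, hu, rfl⟩ := Finset.mem_image.1 hj
        exact (key u hu).1

lemma liminf_eq_top {T : ℕ} (hbv : BoundedVariationOn V (Icc 0 (T:ℝ)))
    (hll : ∀ s ∈ Set.Ioi (0 : ℝ),
      Filter.Tendsto V (nhdsWithin s (Set.Iio s)) (nhds (Vm s)))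
    {x : ℝ} (hinf : (Sset V Vm x ∩ Ioc 0 (T:ℝ)).Infinite) :
    Filter.atTop.liminf (fun n => NN V T n x) = ⊤ := by
  by_contra h
  have hlt : Filter.atTop.liminf (fun n => NN V T n x) < ⊤ := lt_top_iff_ne_top.2 h
  obtain ⟨k, hk⟩ := ENNReal.exists_nat_gt h
  have : (k : ℝ≥0∞) ≤ Filter.atTop.liminf (fun n => NN V T n x) := by
    obtain ⟨t, hts, htc⟩ := hinf.exists_subset_card_eq k
    obtain ⟨δ, hδ, hsep⟩ := exists_sep (t := t)
    obtain ⟨n, hn⟩ := exists_pow_lt_of_lt_one hδ (by norm_num : (1/2:ℝ) < 1)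
    apply le_liminf_of_le (by isBoundedDefault)
    filter_upwards [Filter.eventually_ge_atTop n] with m hmn
    have hm : (1/2:ℝ) ^ m < δ :=
      lt_of_le_of_lt (pow_le_pow_of_le_one (by norm_num) (by norm_num) hmn) hn
    calc (k : ℝ≥0∞) = (t.card : ℝ≥0∞) := by rw [htc]
      _ ≤ NN V T m x := NN_ge V Vm hbv hll hts hδ hsep hm
  exact absurd (lt_of_le_of_lt this hk) (lt_irrefl _)

lemma measurable_NN (T n : ℕ) : Measurable (NN V T n) := by
  apply Finset.measurable_sum
  intro j _
  exact measurable_one.indicator measurableSet_Icc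

lemma ae_finite_S (hll : ∀ s ∈ Set.Ioi (0 : ℝ),
      Filter.Tendsto V (nhdsWithin s (Set.Iio s)) (nhds (Vm s)))
    (hbv : ∀ T : ℝ, BoundedVariationOn V (Set.Icc 0 T)) :
    ∀ᵐ x : ℝ ∂volume, ∀ T : ℕ, (Sset V Vm x ∩ Ioc 0 (T:ℝ)).Finite := by
  rw [MeasureTheory.ae_all_iff]
  intro T
  have hbvT := hbv (T : ℝ)
  set F : ℝ → ℝ≥0∞ := fun x => Filter.atTop.liminf (fun n => NN V T n x) with hF
  have hFmeas : Measurable F := Measurable.liminf (measurable_NN V T)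
  have hFint : ∫⁻ x, F x ≠ ⊤ := by
    have h1 : ∫⁻ x, F x ≤ Filter.atTop.liminf (fun n => ∫⁻ x, NN V T n x) :=
      lintegral_liminf_le (measurable_NN V T)
    have h2 : Filter.atTop.liminf (fun n => ∫⁻ x, NN V T n x)
        ≤ eVariationOn V (Icc 0 (T:ℝ)) := by
      apply Filter.liminf_le_of_frequently_le
        (Filter.Frequently.of_forall fun n => lintegral_NN_le V hbvT)
        (by isBoundedDefault)
    exact ((h1.trans h2).trans_lt hbvT.lt_top).ne
  filter_upwards [ae_lt_top hFmeas hFint] with x hx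
  by_contra hcon
  have : F x = ⊤ := liminf_eq_top V Vm hbvT hll hcon
  rw [this] at hx
  exact absurd hx (lt_irrefl _)

lemma countable_jumps
    (hll : ∀ s ∈ Set.Ioi (0 : ℝ),
      Filter.Tendsto V (nhdsWithin s (Set.Iio s)) (nhds (Vm s)))
    (hbv : ∀ T : ℝ, BoundedVariationOn V (Set.Icc 0 T)) :
    {u : ℝ | 0 < u ∧ V u ≠ Vm u}.Countable := by
  have hlbv : LocallyBoundedVariationOn V (Ici 0) := by
    intro a b ha hb
    refine (lt_of_le_of_lt (eVariationOn.mono V ?_) (hbv b).lt_top).ne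
    rintro y ⟨hy0, hya, hyb⟩
    exact ⟨hy0, hyb⟩
  obtain ⟨p, q, hp, hq, hpq⟩ := hlbv.exists_monotoneOn_sub_monotoneOn
  set p' : ℝ → ℝ := fun s => p (max s 0) with hp'def
  set q' : ℝ → ℝ := fun s => q (max s 0) with hq'def
  have hp' : Monotone p' := fun a b hab =>
    hp (le_max_right a 0) (le_max_right b 0) (max_le_max hab le_rfl)
  have hq' : Monotone q' := fun a b hab =>
    hq (le_max_right a 0) (le_max_right b 0) (max_le_max hab le_rfl)
  apply Set.Countable.mono ?_
    ((by simpa using (hp'.monotoneOn univ).countable_not_continuousWithinAt_Iio :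
      {x | ¬ContinuousWithinAt p' (Iio x) x}.Countable).union
      (by simpa using (hq'.monotoneOn univ).countable_not_continuousWithinAt_Iio :
      {x | ¬ContinuousWithinAt q' (Iio x) x}.Countable))
  rintro u ⟨hu0, hne⟩
  by_contra hu
  simp only [mem_union, mem_setOf_eq, not_or, not_not] at hu
  obtain ⟨hcp, hcq⟩ := hu
  have hVu : Filter.Tendsto V (nhdsWithin u (Iio u)) (nhds (V u)) := by
    have h1 : Filter.Tendsto (fun s => p' s - q' s) (nhdsWithin u (Iio u))
        (nhds (p' u - q' u)) := (hcp.sub hcq).tendsto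
    have h2 : p' u - q' u = V u := by
      have : max u 0 = u := max_eq_left hu0.le
      rw [hp'def, hq'def]
      simp only [this]
      rw [hpq]; rfl
    rw [h2] at h1
    apply h1.congr'
    filter_upwards [Ioo_mem_nhdsLT_of_mem (show u ∈ Ioc (0:ℝ) u from ⟨hu0, le_refl u⟩)]
      with s hs
    have : max s 0 = s := max_eq_left hs.1.le
    rw [hp'def, hq'def]
    simp only [this]
    rw [hpq]; rfl
  exact hne (tendsto_nhds_unique hVu (hll u hu0))

end AeSimpleAux

open AeSimpleAux in
/-- For a càdlàg function `V` on `[0,∞)` of finite variation on every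
compact interval, Lebesgue-almost every `x ∈ ℝ` is a simple level for `V` (the set of
complex levels has Lebesgue measure zero). -/
theorem ae_simple_level
    (V Vm : ℝ → ℝ)
    (hV_rc : ∀ s ∈ Set.Ici (0 : ℝ), ContinuousWithinAt V (Set.Ici s) s)
    (hV_ll : ∀ s ∈ Set.Ioi (0 : ℝ),
      Filter.Tendsto V (nhdsWithin s (Set.Iio s)) (nhds (Vm s)))
    (hV_bv : ∀ T : ℝ, BoundedVariationOn V (Set.Icc 0 T)) :
    ∀ᵐ x : ℝ ∂volume, SimpleLevel V Vm x := by
  have h1 := ae_finite_S V Vm hV_ll hV_bv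
  have hD := countable_jumps V Vm hV_ll hV_bv
  set B : Set ℝ := (V '' {u : ℝ | 0 < u ∧ V u ≠ Vm u}) ∪
    (Vm '' {u : ℝ | 0 < u ∧ V u ≠ Vm u}) with hBdef
  have hB : B.Countable := (hD.image V).union (hD.image Vm)
  have h2 : ∀ᵐ x : ℝ ∂volume, x ∉ B := hB.ae_notMem volume
  filter_upwards [h1, h2] with x hx1 hx2
  constructor
  · intro a ha hacc
    obtain ⟨T, hT⟩ := exists_nat_ge (a + 1)
    have hfin : (Sset V Vm x ∩ Ioc 0 (T:ℝ)).Finite := hx1 T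
    set K' : Set ℝ := (Sset V Vm x ∩ Ioc 0 (T:ℝ)) \ {a} with hK'def
    have hK'fin : K'.Finite := hfin.diff
    have hcl : IsClosed K' := hK'fin.isClosed
    have haK' : a ∉ K' := fun h => h.2 rfl
    have hU : Metric.ball a 1 ∩ K'ᶜ ∈ nhds a :=
      (Metric.isOpen_ball.inter hcl.isOpen_compl).mem_nhds
        ⟨Metric.mem_ball_self one_pos, haK'⟩
    rw [accPt_iff_nhds] at hacc
    obtain ⟨y, ⟨⟨hyb, hyK'⟩, hyS⟩, hya⟩ := hacc _ hU
    apply hyK'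
    have hyT : y ≤ (T:ℝ) := by
      have := Metric.mem_ball.1 hyb
      rw [Real.dist_eq, abs_lt] at this
      linarith
    exact ⟨⟨hyS, hyS.1, hyT⟩, hya⟩
  · rw [Set.eq_empty_iff_forall_notMem]
    rintro u ⟨hu0, hne, hx⟩
    apply hx2
    rcases hx with h | h
    · exact Or.inl ⟨u, ⟨hu0, hne⟩, h.symm⟩
    · exact Or.inr ⟨u, ⟨hu0, hne⟩, h.symm⟩
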